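/- The cone of separable hermitian 2-forms on H = K ⊗ L has nonempty interior in the real vector space of all hermitian 2-forms on H. Equivalently, the separable forms span the whole space of hermitian 2-forms. -/

import Mathlib

open scoped TensorProduct ComplexConjugate
open Finset

variable {K L : Type*} [AddCommGroup K] [Module ℂ K] [FiniteDimensional ℂ K]
  [AddCommGroup L] [Module ℂ L] [FiniteDimensional ℂ L]

/-- The linear functional `φ ⊗ ψ` on `K ⊗[ℂ] L`. -/
noncomputable def prodFun (φ : K →ₗ[ℂ] ℂ) (ψ : L →ₗ[ℂ] ℂ) : (K ⊗[ℂ] L) →ₗ[ℂ] ℂ :=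
  (TensorProduct.lid ℂ ℂ).toLinearMap ∘ₗ TensorProduct.map φ ψ

/-- Hermitian tensor product of two linear functionals. -/
noncomputable def hermOdot (α β : (K ⊗[ℂ] L) →ₗ[ℂ] ℂ) :
    (K ⊗[ℂ] L) → (K ⊗[ℂ] L) → ℂ :=
  fun z w => (conj (α z) * β w + conj (β z) * α w) / 2

/-- A hermitian 2-form on `K ⊗ L` is separable if it is a finite sum of product forms. -/
def IsSepForm (ρ : (K ⊗[ℂ] L) → (K ⊗[ℂ] L) → ℂ) : Prop :=
  ∃ (P : ℕ) (φ : Fin P → (K →ₗ[ℂ] ℂ)) (ψ : Fin P → (L →ₗ[ℂ] ℂ)),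
    ρ = fun z w => ∑ p, hermOdot (prodFun (φ p) (ψ p)) (prodFun (φ p) (ψ p)) z w


/-- A hermitian 2-form: sesquilinear (conjugate-linear in the first slot,
linear in the second) with hermitian symmetry. -/
def IsHermForm (ρ : (K ⊗[ℂ] L) → (K ⊗[ℂ] L) → ℂ) : Prop :=
  (∀ z w w', ρ z (w + w') = ρ z w + ρ z w') ∧
  (∀ (c : ℂ) z w, ρ z (c • w) = c * ρ z w) ∧
  (∀ z z' w, ρ (z + z') w = ρ z w + ρ z' w) ∧
  (∀ (c : ℂ) z w, ρ (c • z) w = conj c * ρ z w) ∧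
  (∀ z w, ρ w z = conj (ρ z w))


set_option linter.unusedSectionVars false

lemma prodFun_tmul (φ : K →ₗ[ℂ] ℂ) (ψ : L →ₗ[ℂ] ℂ) (x : K) (y : L) :
    prodFun φ ψ (x ⊗ₜ y) = φ x * ψ y := by
  simp [prodFun, TensorProduct.lid_tmul, smul_eq_mul]
lemma prodFun_add_left (φ φ' : K →ₗ[ℂ] ℂ) (ψ : L →ₗ[ℂ] ℂ) :
    prodFun (φ + φ') ψ = prodFun φ ψ + prodFun φ' ψ := by
  apply TensorProduct.ext'; intro x y; simp [prodFun_tmul]; ring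
lemma prodFun_smul_left (c : ℂ) (φ : K →ₗ[ℂ] ℂ) (ψ : L →ₗ[ℂ] ℂ) :
    prodFun (c • φ) ψ = c • prodFun φ ψ := by
  apply TensorProduct.ext'; intro x y; simp [prodFun_tmul, smul_eq_mul]; ring
lemma prodFun_add_right (φ : K →ₗ[ℂ] ℂ) (ψ ψ' : L →ₗ[ℂ] ℂ) :
    prodFun φ (ψ + ψ') = prodFun φ ψ + prodFun φ ψ' := by
  apply TensorProduct.ext'; intro x y; simp [prodFun_tmul]; ring
lemma prodFun_smul_right (c : ℂ) (φ : K →ₗ[ℂ] ℂ) (ψ : L →ₗ[ℂ] ℂ) :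
    prodFun φ (c • ψ) = c • prodFun φ ψ := by
  apply TensorProduct.ext'; intro x y; simp [prodFun_tmul, smul_eq_mul]; ring

lemma isSep_single (φ : K →ₗ[ℂ] ℂ) (ψ : L →ₗ[ℂ] ℂ) :
    IsSepForm (hermOdot (prodFun φ ψ) (prodFun φ ψ)) := by
  refine ⟨1, fun _ => φ, fun _ => ψ, ?_⟩
  funext z w
  rw [Fin.sum_univ_one]


private lemma polarize (a b c d a' b' c' d' : ℂ) :
    (conj a * d' + conj d * a') / 2
      = (1/16 : ℂ) * (conj (a + (1:ℂ) * b + (1:ℂ) * c + (1:ℂ) * (1:ℂ) * d) * (a' + (1:ℂ) * b' + (1:ℂ) * c' + (1:ℂ) * (1:ℂ) * d')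
        + conj (a + (-1:ℂ) * b + (-1:ℂ) * c + (-1:ℂ) * (-1:ℂ) * d) * (a' + (-1:ℂ) * b' + (-1:ℂ) * c' + (-1:ℂ) * (-1:ℂ) * d')
        + conj (a + -Complex.I * b + Complex.I * c + Complex.I * -Complex.I * d) * (a' + -Complex.I * b' + Complex.I * c' + Complex.I * -Complex.I * d')
        + conj (a + Complex.I * b + -Complex.I * c + -Complex.I * Complex.I * d) * (a' + Complex.I * b' + -Complex.I * c' + -Complex.I * Complex.I * d')
        - conj (a + (-1:ℂ) * b + (1:ℂ) * c + (1:ℂ) * (-1:ℂ) * d) * (a' + (-1:ℂ) * b' + (1:ℂ) * c' + (1:ℂ) * (-1:ℂ) * d')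
        - conj (a + (1:ℂ) * b + (-1:ℂ) * c + (-1:ℂ) * (1:ℂ) * d) * (a' + (1:ℂ) * b' + (-1:ℂ) * c' + (-1:ℂ) * (1:ℂ) * d')
        - conj (a + Complex.I * b + Complex.I * c + Complex.I * Complex.I * d) * (a' + Complex.I * b' + Complex.I * c' + Complex.I * Complex.I * d')
        - conj (a + -Complex.I * b + -Complex.I * c + -Complex.I * -Complex.I * d) * (a' + -Complex.I * b' + -Complex.I * c' + -Complex.I * -Complex.I * d')) := by
  simp only [map_add, map_mul, map_neg, map_one, Complex.conj_I]
  ring_nf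
  simp only [Complex.I_sq, pow_succ, pow_zero, one_mul, Complex.I_mul_I]
  ring_nf

set_option maxHeartbeats 8000000 in
lemma key (φ₁ φ₂ : K →ₗ[ℂ] ℂ) (ψ₁ ψ₂ : L →ₗ[ℂ] ℂ) :
    hermOdot (prodFun φ₁ ψ₁) (prodFun φ₂ ψ₂) ∈
      Submodule.span ℝ {σ : (K ⊗[ℂ] L) → (K ⊗[ℂ] L) → ℂ | IsSepForm σ} := by
  set S := Submodule.span ℝ {σ : (K ⊗[ℂ] L) → (K ⊗[ℂ] L) → ℂ | IsSepForm σ}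
  have hmem : ∀ (φ : K →ₗ[ℂ] ℂ) (ψ : L →ₗ[ℂ] ℂ),
      hermOdot (prodFun φ ψ) (prodFun φ ψ) ∈ S :=
    fun φ ψ => Submodule.subset_span (isSep_single φ ψ)
  have hkey : hermOdot (prodFun φ₁ ψ₁) (prodFun φ₂ ψ₂)
      = (1/16 : ℝ) • hermOdot (prodFun (φ₁ + (1:ℂ) • φ₂) (ψ₁ + (1:ℂ) • ψ₂)) (prodFun (φ₁ + (1:ℂ) • φ₂) (ψ₁ + (1:ℂ) • ψ₂))
      + (1/16 : ℝ) • hermOdot (prodFun (φ₁ + (-1:ℂ) • φ₂) (ψ₁ + (-1:ℂ) • ψ₂)) (prodFun (φ₁ + (-1:ℂ) • φ₂) (ψ₁ + (-1:ℂ) • ψ₂))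
      + (1/16 : ℝ) • hermOdot (prodFun (φ₁ + Complex.I • φ₂) (ψ₁ + -Complex.I • ψ₂)) (prodFun (φ₁ + Complex.I • φ₂) (ψ₁ + -Complex.I • ψ₂))
      + (1/16 : ℝ) • hermOdot (prodFun (φ₁ + -Complex.I • φ₂) (ψ₁ + Complex.I • ψ₂)) (prodFun (φ₁ + -Complex.I • φ₂) (ψ₁ + Complex.I • ψ₂))
      + (-1/16 : ℝ) • hermOdot (prodFun (φ₁ + (1:ℂ) • φ₂) (ψ₁ + (-1:ℂ) • ψ₂)) (prodFun (φ₁ + (1:ℂ) • φ₂) (ψ₁ + (-1:ℂ) • ψ₂))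
      + (-1/16 : ℝ) • hermOdot (prodFun (φ₁ + (-1:ℂ) • φ₂) (ψ₁ + (1:ℂ) • ψ₂)) (prodFun (φ₁ + (-1:ℂ) • φ₂) (ψ₁ + (1:ℂ) • ψ₂))
      + (-1/16 : ℝ) • hermOdot (prodFun (φ₁ + Complex.I • φ₂) (ψ₁ + Complex.I • ψ₂)) (prodFun (φ₁ + Complex.I • φ₂) (ψ₁ + Complex.I • ψ₂))
      + (-1/16 : ℝ) • hermOdot (prodFun (φ₁ + -Complex.I • φ₂) (ψ₁ + -Complex.I • ψ₂)) (prodFun (φ₁ + -Complex.I • φ₂) (ψ₁ + -Complex.I • ψ₂))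
      := by
    have hexp : ∀ (u v : ℂ) (t : K ⊗[ℂ] L),
        prodFun (φ₁ + u • φ₂) (ψ₁ + v • ψ₂) t
          = prodFun φ₁ ψ₁ t + v * prodFun φ₁ ψ₂ t + u * prodFun φ₂ ψ₁ t
            + u * v * prodFun φ₂ ψ₂ t := by
      intro u v t
      rw [prodFun_add_left, prodFun_smul_left]
      simp only [LinearMap.add_apply, LinearMap.smul_apply]
      rw [prodFun_add_right, prodFun_add_right, prodFun_smul_right, prodFun_smul_right]
      simp only [LinearMap.add_apply, LinearMap.smul_apply, smul_eq_mul]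
      ring
    funext z w
    simp only [Pi.add_apply, Pi.sub_apply, Pi.smul_apply, hermOdot, hexp,
      add_self_div_two, Complex.real_smul, Complex.ofReal_div, Complex.ofReal_one, Complex.ofReal_neg,
      Complex.ofReal_ofNat]
    linear_combination polarize (prodFun φ₁ ψ₁ z) (prodFun φ₁ ψ₂ z) (prodFun φ₂ ψ₁ z)
      (prodFun φ₂ ψ₂ z) (prodFun φ₁ ψ₁ w) (prodFun φ₁ ψ₂ w) (prodFun φ₂ ψ₁ w)
      (prodFun φ₂ ψ₂ w)
  rw [hkey]
  refine add_mem (add_mem (add_mem (add_mem (add_mem (add_mem (add_mem ?_ ?_) ?_) ?_) ?_) ?_) ?_) ?_ <;>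
    exact Submodule.smul_mem S _ (hmem _ _)

private lemma scalarId (m zI zJ wI wJ : ℂ) :
    conj zI * wJ * m + conj zJ * wI * conj m
      = 2 * ((m.re : ℂ) * ((conj zI * wJ + conj zJ * wI) / 2)
           + (m.im : ℂ) * ((conj zI * (Complex.I * wJ) + conj (Complex.I * zJ) * wI) / 2)) := by
  rw [map_mul, Complex.conj_I]
  linear_combination (norm := (push_cast; ring1)) ((conj zI * wJ + conj zJ * wI) / 2) *
      (Complex.add_conj m)
    + ((conj zI * wJ - conj zJ * wI) / 2) * (Complex.sub_conj m)

lemma coord_eq {ι κ : Type*} [Fintype ι] [Fintype κ] [DecidableEq ι] [DecidableEq κ]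
    (bK : Module.Basis ι ℂ K) (bL : Module.Basis κ ℂ L) (I : ι × κ) :
    (bK.tensorProduct bL).coord I = prodFun (bK.coord I.1) (bL.coord I.2) := by
  apply (bK.tensorProduct bL).ext
  rintro ⟨a, c⟩
  rw [Module.Basis.tensorProduct_apply, prodFun_tmul, Module.Basis.coord_apply, Module.Basis.coord_apply,
    Module.Basis.coord_apply, Module.Basis.tensorProduct_repr_tmul_apply]
  simp only [Module.Basis.repr_self_apply, smul_eq_mul]
  ring

/-- the separable forms span the whole real vector space of
hermitian 2-forms (equivalently the separable cone has nonempty interior). -/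
theorem sepForms_span (ρ : (K ⊗[ℂ] L) → (K ⊗[ℂ] L) → ℂ) (hρ : IsHermForm ρ) :
    ρ ∈ Submodule.span ℝ {σ : (K ⊗[ℂ] L) → (K ⊗[ℂ] L) → ℂ | IsSepForm σ} := by
  classical
  set S := Submodule.span ℝ {σ : (K ⊗[ℂ] L) → (K ⊗[ℂ] L) → ℂ | IsSepForm σ} with hS
  have hzero_left : ∀ w, ρ 0 w = 0 := fun w => by simpa using hρ.2.2.2.1 0 0 w
  have hzero_right : ∀ z, ρ z 0 = 0 := fun z => by simpa using hρ.2.1 0 z 0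
  have hleft : ∀ {ι : Type} (s : Finset ι) (c : ι → ℂ) (v : ι → K ⊗[ℂ] L) (w : K ⊗[ℂ] L),
      ρ (∑ i ∈ s, c i • v i) w = ∑ i ∈ s, conj (c i) * ρ (v i) w := by
    intro ι s c v w
    induction s using Finset.induction_on with
    | empty => simpa using hzero_left w
    | insert _ _ h ih =>
      rw [Finset.sum_insert h, Finset.sum_insert h, hρ.2.2.1, hρ.2.2.2.1, ih]
  have hright : ∀ {ι : Type} (z : K ⊗[ℂ] L) (s : Finset ι) (d : ι → ℂ) (v : ι → K ⊗[ℂ] L),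
      ρ z (∑ j ∈ s, d j • v j) = ∑ j ∈ s, d j * ρ z (v j) := by
    intro ι z s d v
    induction s using Finset.induction_on with
    | empty => simpa using hzero_right z
    | insert _ _ h ih =>
      rw [Finset.sum_insert h, Finset.sum_insert h, hρ.1, hρ.2.1, ih]
  obtain ⟨nK, bK⟩ : Σ n, Module.Basis (Fin n) ℂ K := ⟨_, Module.finBasis ℂ K⟩
  obtain ⟨nL, bL⟩ : Σ n, Module.Basis (Fin n) ℂ L := ⟨_, Module.finBasis ℂ L⟩
  have hA : ∀ (I : Fin nK × Fin nL) (t : K ⊗[ℂ] L),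
      prodFun (bK.coord I.1) (bL.coord I.2) t = (bK.tensorProduct bL).repr t I := by
    intro I t
    rw [← coord_eq bK bL I, Module.Basis.coord_apply]
  have main : ρ = ∑ I : Fin nK × Fin nL, ∑ J : Fin nK × Fin nL,
      ((ρ ((bK.tensorProduct bL) I) ((bK.tensorProduct bL) J)).re •
          hermOdot (prodFun (bK.coord I.1) (bL.coord I.2)) (prodFun (bK.coord J.1) (bL.coord J.2))
        + (ρ ((bK.tensorProduct bL) I) ((bK.tensorProduct bL) J)).im •
          hermOdot (prodFun (bK.coord I.1) (bL.coord I.2))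
            (Complex.I • prodFun (bK.coord J.1) (bL.coord J.2))) := by
    funext z w
    have hL : ρ z w = ∑ I : Fin nK × Fin nL, ∑ J : Fin nK × Fin nL,
        conj ((bK.tensorProduct bL).repr z I) * (bK.tensorProduct bL).repr w J *
          ρ ((bK.tensorProduct bL) I) ((bK.tensorProduct bL) J) := by
      conv_lhs => rw [← (bK.tensorProduct bL).sum_repr z, ← (bK.tensorProduct bL).sum_repr w]
      rw [hleft]
      refine Finset.sum_congr rfl fun I _ => ?_
      rw [hright, Finset.mul_sum]
      refine Finset.sum_congr rfl fun J _ => ?_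
      ring
    rw [hL]
    simp only [Finset.sum_apply, Pi.add_apply, Pi.smul_apply, hermOdot, LinearMap.smul_apply,
      smul_eq_mul, hA, Complex.real_smul]
    have hswap : (∑ I : Fin nK × Fin nL, ∑ J : Fin nK × Fin nL,
          conj ((bK.tensorProduct bL).repr z I) * (bK.tensorProduct bL).repr w J *
            ρ ((bK.tensorProduct bL) I) ((bK.tensorProduct bL) J))
        = ∑ I : Fin nK × Fin nL, ∑ J : Fin nK × Fin nL,
          conj ((bK.tensorProduct bL).repr z J) * (bK.tensorProduct bL).repr w I *
            ρ ((bK.tensorProduct bL) J) ((bK.tensorProduct bL) I) := Finset.sum_comm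
    refine mul_left_cancel₀ (two_ne_zero (α := ℂ)) ?_
    rw [two_mul]
    nth_rewrite 2 [hswap]
    rw [← Finset.sum_add_distrib, Finset.mul_sum]
    refine Finset.sum_congr rfl fun I _ => ?_
    rw [← Finset.sum_add_distrib, Finset.mul_sum]
    refine Finset.sum_congr rfl fun J _ => ?_
    rw [hρ.2.2.2.2 ((bK.tensorProduct bL) I) ((bK.tensorProduct bL) J)]
    exact scalarId (ρ ((bK.tensorProduct bL) I) ((bK.tensorProduct bL) J))
      ((bK.tensorProduct bL).repr z I) ((bK.tensorProduct bL).repr z J)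
      ((bK.tensorProduct bL).repr w I) ((bK.tensorProduct bL).repr w J)
  rw [main]
  refine sum_mem fun I _ => sum_mem fun J _ =>
    add_mem (Submodule.smul_mem S _ (key _ _ _ _)) ?_
  rw [← prodFun_smul_left]
  exact Submodule.smul_mem S _ (key _ _ _ _)
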